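/- Let κ be infinite and B = {(A, A∩C, C) : A,C ∈ F(κ), A Δ C finite}, a sublattice of the lattice S of balanced triples in F(κ)³ with C \ m finite. Then B is a maximal Boolean sublattice of S: any complemented bounded sublattice C of S properly containing B fails distributivity. Specifically, if (A,B,C) ∈ C has B ⊄ A, then choosing a finite nonempty F ⊆ B\A, the elements g(F,∅), g(∅,F) ∈ B witness failure of the distributive law with (A,B,C). -/
import Mathlib


open Set

/-- `m(X,Y,Z) = (X∩Y) ∪ (X∩Z) ∪ (Y∩Z)`. -/
def mSet {κ : Type*} (X Y Z : Set κ) : Set κ := (X ∩ Y) ∪ (X ∩ Z) ∪ (Y ∩ Z)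

/-- The finite/cofinite algebra on `κ`. -/
def FinCofin (κ : Type*) : Set (Set κ) := {X | X.Finite ∨ Xᶜ.Finite}

/-- A triple of sets is balanced if its pairwise intersections coincide. -/
def BalancedT {κ : Type*} (t : Set κ × Set κ × Set κ) : Prop :=
  t.1 ∩ t.2.1 = t.1 ∩ t.2.2 ∧ t.1 ∩ t.2.2 = t.2.1 ∩ t.2.2

/-- The set `T` of triples from `F(κ)³` with `C \ m(A,B,C)` finite. -/
def Tset (κ : Type*) : Set (Set κ × Set κ × Set κ) :=
  {t | t.1 ∈ FinCofin κ ∧ t.2.1 ∈ FinCofin κ ∧ t.2.2 ∈ FinCofin κ ∧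
    (t.2.2 \ mSet t.1 t.2.1 t.2.2).Finite}

/-- The lattice `S` of balanced triples in `T`. -/
def Sset (κ : Type*) : Set (Set κ × Set κ × Set κ) :=
  {t | BalancedT t ∧ t ∈ Tset κ}

/-- Componentwise meet (intersection) of triples. -/
def meetT {κ : Type*} (t u : Set κ × Set κ × Set κ) : Set κ × Set κ × Set κ :=
  (t.1 ∩ u.1, t.2.1 ∩ u.2.1, t.2.2 ∩ u.2.2)

/-- The balanced closure of a triple of sets. -/
def clT {κ : Type*} (t : Set κ × Set κ × Set κ) : Set κ × Set κ × Set κ :=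
  (t.1 ∪ (t.2.1 ∩ t.2.2), t.2.1 ∪ (t.1 ∩ t.2.2), t.2.2 ∪ (t.1 ∩ t.2.1))

/-- Join of balanced triples: balanced closure of the componentwise union. -/
def joinT {κ : Type*} (t u : Set κ × Set κ × Set κ) : Set κ × Set κ × Set κ :=
  clT (t.1 ∪ u.1, t.2.1 ∪ u.2.1, t.2.2 ∪ u.2.2)

/-- The Banaschewski map `f(A,B,C) = (κ\A, κ\(B∪C), κ\(A∪B∪C))`. -/
def fT {κ : Type*} (t : Set κ × Set κ × Set κ) : Set κ × Set κ × Set κ :=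
  (t.1ᶜ, (t.2.1 ∪ t.2.2)ᶜ, (t.1 ∪ t.2.1 ∪ t.2.2)ᶜ)

/-- The map `g(A,C) = (A, A∩C, C)`. -/
def gT {κ : Type*} (p : Set κ × Set κ) : Set κ × Set κ × Set κ :=
  (p.1, p.1 ∩ p.2, p.2)

/-- The maximal Boolean sublattice `B = g(A)`. -/
def Bset (κ : Type*) : Set (Set κ × Set κ × Set κ) :=
  {t | ∃ A C : Set κ, A ∈ FinCofin κ ∧ C ∈ FinCofin κ ∧ (symmDiff A C).Finite ∧
    t = (A, A ∩ C, C)}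


lemma part2aux {κ : Type*} (A B C : Set κ) (hS : (A, B, C) ∈ Sset κ)
    (F : Set κ) (hFfin : F.Finite) (hFB : F ⊆ B \ A) :
    gT (F, (∅ : Set κ)) ∈ Bset κ ∧ gT ((∅ : Set κ), F) ∈ Bset κ ∧
    meetT (A, B, C) (joinT (gT (F, ∅)) (gT (∅, F))) = ((∅, F, ∅) : Set κ × Set κ × Set κ) ∧
    joinT (meetT (A, B, C) (gT (F, ∅))) (meetT (A, B, C) (gT (∅, F))) =
      ((∅, ∅, ∅) : Set κ × Set κ × Set κ) := by
  obtain ⟨⟨hb1, hb2⟩, -⟩ := hS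
  simp only at hb1 hb2
  have hAF : A ∩ F = ∅ := by
    ext x; simp only [mem_inter_iff, mem_empty_iff_false, iff_false, not_and]
    intro hxA hxF; exact (hFB hxF).2 hxA
  have hBF : B ∩ F = F := inter_eq_self_of_subset_right (fun x hx => (hFB hx).1)
  have hCF : C ∩ F = ∅ := by
    ext x; simp only [mem_inter_iff, mem_empty_iff_false, iff_false, not_and]
    intro hxC hxF
    have : x ∈ B ∩ C := ⟨(hFB hxF).1, hxC⟩
    rw [← hb2, ← hb1] at this
    exact (hFB hxF).2 this.1
  have hj : joinT (gT (F, (∅ : Set κ))) (gT ((∅ : Set κ), F)) = (F, F, F) := by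
    simp [joinT, gT, clT]
  refine ⟨⟨F, ∅, Or.inl hFfin, Or.inl finite_empty, by simpa [symmDiff] using hFfin, by
      simp [gT]⟩,
    ⟨∅, F, Or.inl finite_empty, Or.inl hFfin, by simpa [symmDiff] using hFfin, by
      simp [gT]⟩, ?_, ?_⟩
  · rw [hj]; simp [meetT, hAF, hBF, hCF]
  · simp [meetT, gT, joinT, clT, hAF, hCF]

lemma case2aux {κ : Type*} [Infinite κ] (Cs : Set (Set κ × Set κ × Set κ))
    (hCs : Cs ⊆ Sset κ)
    (hcompl : ∀ t ∈ Cs, ∃ u ∈ Cs, meetT t u = ((∅, ∅, ∅) : Set κ × Set κ × Set κ) ∧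
        joinT t u = ((univ, univ, univ) : Set κ × Set κ × Set κ))
    (hall : ∀ t ∈ Cs, t.2.1 ⊆ t.1)
    (t : Set κ × Set κ × Set κ) (ht : t ∈ Cs) : t ∈ Bset κ := by
  obtain ⟨a, b, c⟩ := t
  obtain ⟨⟨hb1, hb2⟩, ha', hb', hc', hfin⟩ := hCs ht
  simp only at hb1 hb2 ha' hb' hc' hfin ⊢
  have hba : b ⊆ a := hall _ ht
  have hbeq : b = a ∩ c := by
    rw [← hb1]; exact (inter_eq_self_of_subset_right hba).symm
  -- C \ A finite from t ∈ Sset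
  have hca : (c \ a).Finite := by
    refine hfin.subset ?_
    intro x hx
    refine ⟨hx.1, fun hm => ?_⟩
    simp only [mSet, hbeq, mem_union, mem_inter_iff] at hm
    rcases hm with (⟨hxa, -⟩ | ⟨hxa, -⟩) | ⟨⟨hxa, -⟩, -⟩ <;> exact hx.2 hxa
  -- complement
  obtain ⟨⟨a', b', c'⟩, hu, hmeet, hjoin⟩ := hcompl _ ht
  have hba' : b' ⊆ a' := hall _ hu
  obtain ⟨⟨hb1', hb2'⟩, -, -, -, hfin'⟩ := hCs hu
  simp only at hb1' hb2' hfin'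
  have hbeq' : b' = a' ∩ c' := by
    rw [← hb1']; exact (inter_eq_self_of_subset_right hba').symm
  simp only [meetT, joinT, clT, Prod.mk.injEq] at hmeet hjoin
  obtain ⟨hma, hmb, hmc⟩ := hmeet
  obtain ⟨hja, hjb, hjc⟩ := hjoin
  -- a ∪ a' = univ
  have haU : a ∪ a' = univ := by
    apply eq_univ_of_univ_subset
    rw [← hjb]
    intro x hx
    rcases hx with hx | hx
    · rcases hx with hx | hx
      exacts [Or.inl (hba hx), Or.inr (hba' hx)]
    · exact hx.1
  have hcU : c ∪ c' = univ := by
    apply eq_univ_of_univ_subset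
    rw [← hjc]
    intro x hx
    rcases hx with hx | hx
    · exact hx
    · rcases hx.2 with hx2 | hx2
      · exact Or.inl ((hbeq ▸ hx2).2)
      · exact Or.inr ((hbeq' ▸ hx2).2)
  have ha'eq : a' = aᶜ := by
    ext x
    simp only [mem_compl_iff]
    constructor
    · intro hx hxa
      have : x ∈ a ∩ a' := ⟨hxa, hx⟩
      rw [hma] at this; exact this
    · intro hx
      rcases (haU.symm ▸ mem_univ x : x ∈ a ∪ a') with h | h
      exacts [absurd h hx, h]
  have hc'eq : c' = cᶜ := by
    ext x
    simp only [mem_compl_iff]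
    constructor
    · intro hx hxc
      have : x ∈ c ∩ c' := ⟨hxc, hx⟩
      rw [hmc] at this; exact this
    · intro hx
      rcases (hcU.symm ▸ mem_univ x : x ∈ c ∪ c') with h | h
      exacts [absurd h hx, h]
  -- now A \ C finite from u ∈ Sset
  have hac : (a \ c).Finite := by
    refine hfin'.subset ?_
    intro x hx
    subst ha'eq hc'eq
    refine ⟨hx.2, fun hm => ?_⟩
    simp only [mSet, hbeq', mem_union, mem_inter_iff, mem_compl_iff] at hm
    rcases hm with (⟨hxa, -⟩ | ⟨hxa, -⟩) | ⟨⟨hxa, -⟩, -⟩ <;> exact hxa hx.1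
  exact ⟨a, c, ha', hc', by
    rw [Set.symmDiff_def]; exact hac.union hca, by rw [hbeq]⟩

theorem stmt16 {κ : Type*} [Infinite κ] :
    (∀ Cs : Set (Set κ × Set κ × Set κ), Cs ⊆ Sset κ →
      (∀ t ∈ Cs, ∀ u ∈ Cs, meetT t u ∈ Cs) →
      (∀ t ∈ Cs, ∀ u ∈ Cs, joinT t u ∈ Cs) →
      ((∅, ∅, ∅) : Set κ × Set κ × Set κ) ∈ Cs →
      ((univ, univ, univ) : Set κ × Set κ × Set κ) ∈ Cs →
      (∀ t ∈ Cs, ∃ u ∈ Cs, meetT t u = ((∅, ∅, ∅) : Set κ × Set κ × Set κ) ∧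
        joinT t u = ((univ, univ, univ) : Set κ × Set κ × Set κ)) →
      Bset κ ⊂ Cs →
      ∃ x ∈ Cs, ∃ y ∈ Cs, ∃ z ∈ Cs,
        meetT x (joinT y z) ≠ joinT (meetT x y) (meetT x z)) ∧
    (∀ A B C : Set κ, (A, B, C) ∈ Sset κ → ¬ B ⊆ A →
      ∀ F : Set κ, F.Finite → F.Nonempty → F ⊆ B \ A →
        gT (F, ∅) ∈ Bset κ ∧ gT (∅, F) ∈ Bset κ ∧
        meetT (A, B, C) (joinT (gT (F, ∅)) (gT (∅, F))) = ((∅, F, ∅) : Set κ × Set κ × Set κ) ∧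
        joinT (meetT (A, B, C) (gT (F, ∅))) (meetT (A, B, C) (gT (∅, F))) =
          ((∅, ∅, ∅) : Set κ × Set κ × Set κ)) := by
  constructor
  · intro Cs hCsS hmeetc hjoinc hbot htop hcompl hsub
    by_cases hall : ∀ t ∈ Cs, t.2.1 ⊆ t.1
    · exact absurd (fun t ht => case2aux Cs hCsS hcompl hall t ht) hsub.2
    · push_neg at hall
      obtain ⟨⟨a, b, c⟩, htC, hba⟩ := hall
      obtain ⟨x, hxb, hxa⟩ := not_subset.mp hba
      have hFB : ({x} : Set κ) ⊆ b \ a := by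
        intro y hy; rw [mem_singleton_iff] at hy; subst hy; exact ⟨hxb, hxa⟩
      obtain ⟨hy, hz, hL, hR⟩ := part2aux a b c (hCsS htC) {x} (finite_singleton x) hFB
      refine ⟨(a, b, c), htC, gT ({x}, ∅), hsub.1 hy, gT (∅, {x}), hsub.1 hz, ?_⟩
      rw [hL, hR]
      intro h
      exact (singleton_ne_empty x) (congrArg (fun p => p.2.1) h)
  · intro A B C hS _ F hFfin _ hFB
    exact part2aux A B C hS F hFfin hFB
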